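/- For every α ∈ ℝ, define the 2×2 real matrices F_R(α) := (cosh(2α))^(−1/2) • ![![cosh(2α), sinh(2α)], ![0, 1]], V(α) := ![![cosh α, sinh α], ![sinh α, cosh α]], and R(α) := (cosh(2α))^(−1/2) • ![![cosh α, sinh α], ![−sinh α, cosh α]]. Then: (i) F_R(α) = R(α)·V(α), so the right stretch tensor U_R of the RFSS deformation equals the left stretch tensor V_L of the LFSS deformation; and (ii) F_L(α)·F_L(α)ᵀ = F_R(α)ᵀ·F_R(α) = ![![cosh(2α), sinh(2α)], ![sinh(2α), cosh(2α)]], where F_L(α) := (cosh(2α))^(−1/2) • ![![1, sinh(2α)], ![0, cosh(2α)]]. -/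

import Mathlib

open Matrix Real

/-- The RFSS deformation gradient satisfies `F_R = R·V` (so `U_R = V_L`), and the
left Cauchy–Green tensor of LFSS equals the right Cauchy–Green tensor of RFSS
(the key fact underlying Proposition 3.2 of the paper). -/
theorem rfss_polar_decomposition_and_cauchy_green (α : ℝ) :
    let F_R : Matrix (Fin 2) (Fin 2) ℝ :=
      (Real.sqrt (Real.cosh (2*α)))⁻¹ • !![Real.cosh (2*α), Real.sinh (2*α); 0, 1]
    let V : Matrix (Fin 2) (Fin 2) ℝ :=
      !![Real.cosh α, Real.sinh α; Real.sinh α, Real.cosh α]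
    let R : Matrix (Fin 2) (Fin 2) ℝ :=
      (Real.sqrt (Real.cosh (2*α)))⁻¹ • !![Real.cosh α, Real.sinh α; -Real.sinh α, Real.cosh α]
    let F_L : Matrix (Fin 2) (Fin 2) ℝ :=
      (Real.sqrt (Real.cosh (2*α)))⁻¹ • !![1, Real.sinh (2*α); 0, Real.cosh (2*α)]
    F_R = R * V ∧
    F_L * F_Lᵀ = !![Real.cosh (2*α), Real.sinh (2*α); Real.sinh (2*α), Real.cosh (2*α)] ∧
    F_Rᵀ * F_R = !![Real.cosh (2*α), Real.sinh (2*α); Real.sinh (2*α), Real.cosh (2*α)] := by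
  intro F_R V R F_L
  have hc : (0:ℝ) < Real.cosh (2*α) := Real.cosh_pos (2*α)
  have hs : Real.sqrt (Real.cosh (2*α)) * Real.sqrt (Real.cosh (2*α)) = Real.cosh (2*α) :=
    Real.mul_self_sqrt hc.le
  have hs0 : Real.sqrt (Real.cosh (2*α)) ≠ 0 := ne_of_gt (Real.sqrt_pos.mpr hc)
  have h1 : Real.cosh α ^ 2 - Real.sinh α ^ 2 = 1 := Real.cosh_sq_sub_sinh_sq α
  have hcosh2 : Real.cosh (2*α) = Real.cosh α ^ 2 + Real.sinh α ^ 2 := by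
    rw [two_mul, Real.cosh_add]; ring
  have hsinh2 : Real.sinh (2*α) = 2 * Real.sinh α * Real.cosh α := by
    rw [two_mul, Real.sinh_add]; ring
  have hss : Real.sinh (2*α) ^ 2 + 1 = Real.cosh (2*α) ^ 2 := by
    have := Real.cosh_sq_sub_sinh_sq (2*α); nlinarith [this]
  refine ⟨?_, ?_, ?_⟩ <;>
    ext i j <;> fin_cases i <;> fin_cases j <;>
    simp [F_R, V, R, F_L, Matrix.mul_apply, Fin.sum_univ_two, Matrix.smul_apply,
      Matrix.transpose_apply, Matrix.vecHead, Matrix.vecTail, Matrix.cons_val',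
      Matrix.empty_val', Matrix.cons_val_fin_one] <;>
    field_simp <;>
    first
      | ring1
      | linear_combination hcosh2
      | linear_combination hsinh2
      | linear_combination hss
      | linear_combination (-Real.sqrt (Real.cosh (2*α))) * h1
      | linear_combination -h1
      | linear_combination -hs
      | linear_combination (-Real.sinh (2*α)) * hs
      | linear_combination hss - Real.cosh (2*α) * hs
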